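/- Suppose a finite group G acts on a finite module M (over a finite field) satisfying condition N_r, i.e., for every nonzero v ∈ M the stabilizer C_G(v) contains a Sylow r-subgroup of G as a normal subgroup, where r divides |G/C_G(M)|. Then (|M| − 1)/(|C_M(Q)| − 1) = n_r(G), the number of Sylow r-subgroups of G, where Q ∈ Syl_r(G). -/

import Mathlib

open MulAction Finset

/-- Suppose a finite group `G` acts linearly on a finite module `M` over a finite field `F`,
`r` is a prime dividing `|G / C_G(M)|`, and the pair `(G, M)` satisfies condition `N_r`:
for every nonzero `v ∈ M` the stabilizer `C_G(v)` contains a Sylow `r`-subgroup of `G` as a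
normal subgroup. Then `(|M| − 1)/(|C_M(Q)| − 1) = n_r(G)`, the number of Sylow
`r`-subgroups of `G`, where `Q` is any Sylow `r`-subgroup of `G`. -/
theorem stmt_19 (F : Type*) [Field F] [Fintype F]
    (M : Type*) [AddCommGroup M] [Module F M] [Fintype M]
    (G : Type*) [Group G] [Fintype G]
    [DistribMulAction G M] [SMulCommClass G F M]
    (r : ℕ) (hr : r.Prime)
    (hdvd : r ∣ Nat.card (G ⧸ MonoidHom.ker (DistribMulAction.toAddAut G M)))
    (hNr : ∀ v : M, v ≠ 0 → ∃ Q : Sylow r G,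
      (Q : Subgroup G) ≤ MulAction.stabilizer G v ∧
      ((Q : Subgroup G).subgroupOf (MulAction.stabilizer G v)).Normal)
    (Q : Sylow r G) :
    (Nat.card M - 1) / (Nat.card (MulAction.fixedPoints (Q : Subgroup G) M) - 1)
      = Nat.card (Sylow r G) := by
  classical
  haveI : Fact r.Prime := ⟨hr⟩
  -- uniqueness of the Sylow subgroup fixing a nonzero vector
  have huniq : ∀ v : M, v ≠ 0 → ∀ P₁ P₂ : Sylow r G,
      (P₁ : Subgroup G) ≤ stabilizer G v → (P₂ : Subgroup G) ≤ stabilizer G v → P₁ = P₂ := by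
    intro v hv P₁ P₂ h₁ h₂
    obtain ⟨Qv, hQv, hnorm⟩ := hNr v hv
    have hnorm' : ((Qv.subtype hQv : Sylow r (stabilizer G v)) : Subgroup (stabilizer G v)).Normal := by
      rwa [Sylow.coe_subtype]
    haveI := Sylow.unique_of_normal (Qv.subtype hQv) hnorm'
    have e : P₁.subtype h₁ = P₂.subtype h₂ := Subsingleton.elim _ _
    have e2 : (P₁ : Subgroup G).subgroupOf (stabilizer G v)
        = (P₂ : Subgroup G).subgroupOf (stabilizer G v) := by
      rw [← Sylow.coe_subtype (h := h₁), ← Sylow.coe_subtype (h := h₂), e]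
    have e3 := congrArg (Subgroup.map (stabilizer G v).subtype) e2
    rw [Subgroup.subgroupOf_map_subtype, Subgroup.subgroupOf_map_subtype,
      inf_eq_left.mpr h₁, inf_eq_left.mpr h₂] at e3
    exact Sylow.ext e3
  -- conjugation moves fixing relations
  have hfwd : ∀ (g : G) (P : Sylow r G) (v : M), (P : Subgroup G) ≤ stabilizer G v →
      ((g • P : Sylow r G) : Subgroup G) ≤ stabilizer G (g • v) := by
    intro g P v h x hx
    rw [Sylow.smul_def, Sylow.pointwise_smul_def,
      Subgroup.mem_pointwise_smul_iff_inv_smul_mem] at hx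
    have := h (by simpa using hx)
    rw [mem_stabilizer_iff] at this ⊢
    calc x • g • v = (x * g) • v := (mul_smul _ _ _).symm
      _ = (g * (g⁻¹ * x * g)) • v := by group
      _ = g • (g⁻¹ * x * g) • v := mul_smul _ _ _
      _ = g • v := by rw [this]
  have hiff : ∀ (g : G) (P : Sylow r G) (v : M),
      (P : Subgroup G) ≤ stabilizer G v ↔ ((g • P : Sylow r G) : Subgroup G) ≤ stabilizer G (g • v) := by
    intro g P v
    refine ⟨hfwd g P v, fun h => ?_⟩
    have := hfwd g⁻¹ (g • P) (g • v) h
    rwa [inv_smul_smul, inv_smul_smul] at this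
  -- the finsets of nonzero vectors fixed by a given Sylow subgroup
  set s : Sylow r G → Finset M :=
    fun P => univ.filter (fun v : M => v ≠ 0 ∧ (P : Subgroup G) ≤ stabilizer G v) with hs
  have hmem : ∀ (P : Sylow r G) (v : M),
      v ∈ s P ↔ v ≠ 0 ∧ (P : Subgroup G) ≤ stabilizer G v := by
    intro P v; simp [hs]
  -- all fibers have the same cardinality
  have hcards : ∀ P : Sylow r G, (s P).card = (s Q).card := by
    intro P
    obtain ⟨g, hg⟩ := MulAction.exists_smul_eq G Q P
    refine Finset.card_bij' (fun v _ => g⁻¹ • v) (fun v _ => g • v) ?_ ?_ ?_ ?_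
    · intro v hv
      rw [hmem] at hv ⊢
      obtain ⟨hv0, hvf⟩ := hv
      refine ⟨by simp [hv0, smul_eq_zero_iff_eq], ?_⟩
      have := (hiff g⁻¹ P v).mp hvf
      rwa [← hg, inv_smul_smul] at this
    · intro v hv
      rw [hmem] at hv ⊢
      obtain ⟨hv0, hvf⟩ := hv
      refine ⟨by simp [hv0, smul_eq_zero_iff_eq], ?_⟩
      rw [← hg]
      exact (hiff g Q v).mp hvf
    · intro v _; simp
    · intro v _; simp
  -- M is nontrivial
  have hex : ∃ w : M, w ≠ 0 := by
    by_contra h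
    push_neg at h
    haveI : Subsingleton M := ⟨fun a b => (h a).trans (h b).symm⟩
    have hker : MonoidHom.ker (DistribMulAction.toAddAut G M) = ⊤ := by
      ext g
      simp only [MonoidHom.mem_ker, Subgroup.mem_top, iff_true]
      ext m
      exact Subsingleton.elim _ _
    rw [hker] at hdvd
    haveI : Subsingleton (G ⧸ (⊤ : Subgroup G)) := QuotientGroup.subsingleton_quotient_top
    rw [Nat.card_of_subsingleton (1 : G ⧸ (⊤ : Subgroup G))] at hdvd
    exact hr.ne_one (Nat.dvd_one.mp hdvd)
  -- s Q is nonempty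
  have hQne : 0 < (s Q).card := by
    obtain ⟨w, hw⟩ := hex
    obtain ⟨Qw, hQw, -⟩ := hNr w hw
    obtain ⟨g, hg⟩ := MulAction.exists_smul_eq G Qw Q
    rw [Finset.card_pos]
    refine ⟨g • w, ?_⟩
    rw [hmem]
    refine ⟨by simp [hw, smul_eq_zero_iff_eq], ?_⟩
    rw [← hg]
    exact (hiff g Qw w).mp hQw
  -- partition of the nonzero vectors
  have hpart : (univ.filter (fun v : M => v ≠ 0)).card = ∑ P : Sylow r G, (s P).card := by
    rw [← Finset.card_biUnion]
    · congr 1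
      ext v
      rw [Finset.mem_filter, Finset.mem_biUnion]
      constructor
      · rintro ⟨-, hv⟩
        obtain ⟨P, hP, -⟩ := hNr v hv
        exact ⟨P, Finset.mem_univ P, (hmem P v).mpr ⟨hv, hP⟩⟩
      · rintro ⟨P, -, hP⟩
        exact ⟨Finset.mem_univ v, ((hmem P v).mp hP).1⟩
    · intro P₁ _ P₂ _ hne
      refine Finset.disjoint_left.mpr fun v h₁ h₂ => ?_
      rw [hmem] at h₁ h₂
      exact hne (huniq v h₁.1 P₁ P₂ h₁.2 h₂.2)
  -- identify the various cardinalities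
  have hMcard : (univ.filter (fun v : M => v ≠ 0)).card = Nat.card M - 1 := by
    rw [Nat.card_eq_fintype_card, ← Finset.card_univ]
    rw [Finset.filter_ne']
    exact Finset.card_erase_of_mem (Finset.mem_univ 0)
  have hfixQ : (s Q).card = Nat.card (fixedPoints (Q : Subgroup G) M) - 1 := by
    have hfp : ∀ v : M, v ∈ fixedPoints (Q : Subgroup G) M ↔ (Q : Subgroup G) ≤ stabilizer G v := by
      intro v
      constructor
      · intro h x hx
        exact h ⟨x, hx⟩
      · intro h x
        exact h x.2
    have : Nat.card (fixedPoints (Q : Subgroup G) M)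
        = (univ.filter (fun v : M => (Q : Subgroup G) ≤ stabilizer G v)).card := by
      rw [Nat.card_eq_fintype_card, Fintype.card_subtype]
      congr 1
      ext v
      simp only [Finset.mem_filter, Finset.mem_univ, true_and]
      exact hfp v
    rw [this]
    have h0 : (0 : M) ∈ univ.filter (fun v : M => (Q : Subgroup G) ≤ stabilizer G v) := by
      simp only [Finset.mem_filter, Finset.mem_univ, true_and]
      intro x _
      rw [mem_stabilizer_iff, smul_zero]
    rw [← Finset.card_erase_of_mem h0]
    congr 1
    ext v
    simp only [Finset.mem_erase, Finset.mem_filter, Finset.mem_univ, true_and, hmem]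
  -- put everything together
  rw [← hfixQ, ← hMcard, hpart]
  rw [Finset.sum_congr rfl (fun P _ => hcards P), Finset.sum_const, Finset.card_univ,
    smul_eq_mul, Nat.mul_div_cancel _ hQne]
  exact Nat.card_eq_fintype_card.symm
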